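/- Let f ∈ F₁(a,b) with a ≥ 0, let P be a probability measure on a measurable space (Ω,M), let φ₁,…,φ_k : Ω → ℝ be measurable with φ_i ∈ L¹(P), let ψ : Ω → ℝ be measurable with ψ⁻ ∈ L¹(P), let g : ℝᵏ → ℝ be convex with real-valued Legendre transform g*, and let η > 0. Then the map from (0,∞) × ℝ × ℝᵏ to (−∞,∞] sending (λ, β, ν) to g*(ν) + β + ηλ + λ·E_P[f*((ψ − ν·φ − β)/λ)] is convex. -/

import Mathlib

open MeasureTheory Filter Set
open scoped ENNReal NNReal Classical

/-- The positive part of an extended real number, as an element of `ℝ≥0∞`. -/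
noncomputable def erealPos (x : EReal) : ℝ≥0∞ := if x = ⊤ then ⊤ else ENNReal.ofReal x.toReal

/-- Extended expectation of an `EReal`-valued function, with the convention `∞ - ∞ = ∞`. -/
noncomputable def feexp {Ω : Type*} [MeasurableSpace Ω] (P : Measure Ω) (g : Ω → EReal) : EReal :=
  if ∫⁻ x, erealPos (g x) ∂P = ⊤ then ⊤
  else ((∫⁻ x, erealPos (g x) ∂P).toReal : EReal) - ((∫⁻ x, erealPos (-(g x)) ∂P : ℝ≥0∞) : EReal)

/-- The extension of a convex function `f : (a,b) → ℝ` to a convex, lower semicontinuous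
function `ℝ → (-∞,∞]`, taking the limiting values at finite endpoints and `∞` outside `[a,b]`. -/
noncomputable def fExt (a b : EReal) (f : ℝ → ℝ) (x : ℝ) : EReal :=
  if a < (x : EReal) ∧ (x : EReal) < b then (f x : EReal)
  else if (x : EReal) = a then limsup (fun t : ℝ => (f t : EReal)) (nhdsWithin x (Ioi x))
  else if (x : EReal) = b then limsup (fun t : ℝ => (f t : EReal)) (nhdsWithin x (Iio x))
  else ⊤

/-- The `f`-divergence `D_f(Q,P) = E_P[f(dQ/dP)]` for `Q ≪ P`, and `∞` otherwise. -/
noncomputable def fDivg {Ω : Type*} [MeasurableSpace Ω] (a b : EReal) (f : ℝ → ℝ)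
    (Q P : Measure Ω) : EReal :=
  if Q ≪ P then feexp P (fun x => fExt a b f ((Q.rnDeriv P) x).toReal) else ⊤

/-- The Legendre transform `f*(y) = sup_{x ∈ (a,b)} {x y - f x}`. -/
noncomputable def legT (a b : EReal) (f : ℝ → ℝ) (y : ℝ) : EReal :=
  ⨆ x : {t : ℝ // a < (t : EReal) ∧ (t : EReal) < b}, ((x.1 * y - f x.1 : ℝ) : EReal)

lemma erealPos_coe (r : ℝ) : erealPos (r : EReal) = ENNReal.ofReal r := by simp [erealPos]
lemma erealPos_bot : erealPos (⊥ : EReal) = 0 := by simp [erealPos]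

lemma erealPos_mono : Monotone erealPos := by
  intro x y hxy
  induction y with
  | bot => simp [le_bot_iff.1 hxy, erealPos]
  | top => simp [erealPos]
  | coe ry =>
    induction x with
    | bot => simp [erealPos]
    | top => simp at hxy
    | coe rx =>
      rw [erealPos_coe rx, erealPos_coe]
      exact ENNReal.ofReal_le_ofReal (EReal.coe_le_coe_iff.1 hxy)
lemma erealPos_top : erealPos (⊤ : EReal) = ⊤ := by simp [erealPos]

lemma ofReal_max_zero (x : ℝ) : ENNReal.ofReal (max x 0) = ENNReal.ofReal x := by
  rcases le_total x 0 with h | h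
  · rw [max_eq_right h, ENNReal.ofReal_zero, ENNReal.ofReal_eq_zero.2 h]
  · rw [max_eq_left h]

lemma max_zero_eq (x : ℝ) : max x 0 = (x + |x|) / 2 := by
  rcases le_total 0 x with h | h
  · rw [max_eq_left h, abs_of_nonneg h]; ring
  · rw [max_eq_right h, abs_of_nonpos h]; ring

lemma key_real {t ru rv rw : ℝ} (ht : 0 ≤ t) (ht' : t ≤ 1)
    (h : ru ≤ t * rv + (1 - t) * rw) :
    max ru 0 + (max (t * -rv) 0 + max ((1-t) * -rw) 0)
      ≤ max (t * rv) 0 + max ((1-t) * rw) 0 + max (-ru) 0 := by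
  have e1 := max_zero_eq ru
  have e2 := max_zero_eq (t * -rv)
  have e3 := max_zero_eq ((1-t) * -rw)
  have e4 := max_zero_eq (t * rv)
  have e5 := max_zero_eq ((1-t) * rw)
  have e6 := max_zero_eq (-ru)
  have a1 : |t * -rv| = |t * rv| := by rw [mul_neg, abs_neg]
  have a2 : |(1-t) * -rw| = |(1-t) * rw| := by rw [mul_neg, abs_neg]
  have a3 : |(-ru)| = |ru| := abs_neg ru
  rw [e1, e2, e3, e4, e5, e6, a1, a2, a3]
  linarith

lemma key_pointwise {t : ℝ} (ht : 0 < t) (ht' : t < 1) {u v w : EReal}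
    (h : u ≤ (t : EReal) * v + ((1 - t : ℝ) : EReal) * w) :
    erealPos u + (ENNReal.ofReal t * erealPos (-v) + ENNReal.ofReal (1-t) * erealPos (-w))
      ≤ ENNReal.ofReal t * erealPos v + ENNReal.ofReal (1-t) * erealPos w + erealPos (-u) := by
  have ht1 : (0:ℝ) < 1 - t := by linarith
  have hTne : ENNReal.ofReal t ≠ 0 := by simp [ENNReal.ofReal_eq_zero, not_le, ht]
  have hT'ne : ENNReal.ofReal (1-t) ≠ 0 := by
    simp only [ne_eq, ENNReal.ofReal_eq_zero, not_le]; linarith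
  induction v with
  | top =>
    have : ENNReal.ofReal t * erealPos (⊤:EReal) = ⊤ := by
      rw [erealPos_top, ENNReal.mul_top hTne]
    rw [this, top_add, top_add]
    exact le_top
  | bot =>
    have hu : u = ⊥ := by
      have : (t : EReal) * (⊥:EReal) + ((1 - t : ℝ) : EReal) * w = ⊥ := by
        rw [EReal.coe_mul_bot_of_pos ht, EReal.bot_add]
      exact le_bot_iff.1 (this ▸ h)
    subst hu
    have : erealPos (-(⊥:EReal)) = ⊤ := by rw [EReal.neg_bot, erealPos_top]
    rw [this, add_top]
    exact le_top
  | coe rv =>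
    induction w with
    | top =>
      have : ENNReal.ofReal (1-t) * erealPos (⊤:EReal) = ⊤ := by
        rw [erealPos_top, ENNReal.mul_top hT'ne]
      rw [this, add_top, top_add]
      exact le_top
    | bot =>
      have hu : u = ⊥ := by
        have : (t : EReal) * (rv:EReal) + ((1 - t : ℝ) : EReal) * (⊥:EReal) = ⊥ := by
          rw [EReal.coe_mul_bot_of_pos ht1, EReal.add_bot]
        exact le_bot_iff.1 (this ▸ h)
      subst hu
      have : erealPos (-(⊥:EReal)) = ⊤ := by rw [EReal.neg_bot, erealPos_top]
      rw [this, add_top]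
      exact le_top
    | coe rw' =>
      induction u with
      | top =>
        exfalso
        rw [← EReal.coe_mul, ← EReal.coe_mul, ← EReal.coe_add] at h
        exact (EReal.coe_ne_top _) (top_le_iff.1 h)
      | bot =>
        have : erealPos (-(⊥:EReal)) = ⊤ := by rw [EReal.neg_bot, erealPos_top]
        rw [this, add_top]
        exact le_top
      | coe ru =>
        rw [← EReal.coe_mul, ← EReal.coe_mul, ← EReal.coe_add, EReal.coe_le_coe_iff] at h
        rw [← EReal.coe_neg, ← EReal.coe_neg, ← EReal.coe_neg,
          erealPos_coe, erealPos_coe, erealPos_coe, erealPos_coe, erealPos_coe, erealPos_coe,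
          ← ENNReal.ofReal_mul ht.le, ← ENNReal.ofReal_mul ht1.le,
          ← ENNReal.ofReal_mul ht.le, ← ENNReal.ofReal_mul ht1.le]
        calc ENNReal.ofReal ru + (ENNReal.ofReal (t * -rv) + ENNReal.ofReal ((1-t) * -rw'))
            = ENNReal.ofReal (max ru 0 + (max (t * -rv) 0 + max ((1-t) * -rw') 0)) := by
              rw [ENNReal.ofReal_add (le_max_right _ _) (by positivity),
                ENNReal.ofReal_add (le_max_right _ _) (le_max_right _ _),
                ofReal_max_zero, ofReal_max_zero, ofReal_max_zero]
          _ ≤ ENNReal.ofReal (max (t * rv) 0 + max ((1-t) * rw') 0 + max (-ru) 0) :=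
              ENNReal.ofReal_le_ofReal (key_real ht.le ht'.le h)
          _ = ENNReal.ofReal (t * rv) + ENNReal.ofReal ((1-t) * rw') + ENNReal.ofReal (-ru) := by
              rw [ENNReal.ofReal_add (by positivity) (le_max_right _ _),
                ENNReal.ofReal_add (le_max_right _ _) (le_max_right _ _),
                ofReal_max_zero, ofReal_max_zero, ofReal_max_zero]

lemma erealPos_mul {c : ℝ} (hc : 0 < c) (x : EReal) :
    erealPos ((c : EReal) * x) = ENNReal.ofReal c * erealPos x := by
  induction x with
  | bot => rw [EReal.coe_mul_bot_of_pos hc, erealPos_bot, mul_zero]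
  | top =>
    rw [EReal.coe_mul_top_of_pos hc, erealPos_top, ENNReal.mul_top]
    simp [ENNReal.ofReal_eq_zero, not_le, hc]
  | coe r => rw [← EReal.coe_mul, erealPos_coe, erealPos_coe, ENNReal.ofReal_mul hc.le]

lemma erealPos_neg_mul {c : ℝ} (hc : 0 < c) (x : EReal) :
    erealPos (-((c : EReal) * x)) = ENNReal.ofReal c * erealPos (-x) := by
  rw [← mul_neg, erealPos_mul hc]


lemma coe_ennreal_eq {N : ℝ≥0∞} (h : N ≠ ⊤) : (N : EReal) = ((N.toReal : ℝ) : EReal) := by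
  rw [← EReal.toReal_coe_ennreal]
  exact (EReal.coe_toReal (by simpa [EReal.coe_ennreal_eq_top_iff] using h)
    (EReal.coe_ennreal_ne_bot _)).symm

lemma feexp_ne_bot {Ω : Type*} [MeasurableSpace Ω] {P : Measure Ω} {G : Ω → EReal}
    (h : ∫⁻ x, erealPos (-(G x)) ∂P ≠ ⊤) : feexp P G ≠ ⊥ := by
  rw [feexp]
  split_ifs with h'
  · simp
  · rw [coe_ennreal_eq h, ← EReal.coe_sub]
    exact EReal.coe_ne_bot _

lemma feexp_pos_top {Ω : Type*} [MeasurableSpace Ω] {P : Measure Ω} {G : Ω → EReal}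
    (h : ∫⁻ x, erealPos (G x) ∂P = ⊤) : feexp P G = ⊤ := if_pos h

lemma feexp_eq {Ω : Type*} [MeasurableSpace Ω] {P : Measure Ω} {G : Ω → EReal}
    (h : ∫⁻ x, erealPos (G x) ∂P ≠ ⊤) (h' : ∫⁻ x, erealPos (-(G x)) ∂P ≠ ⊤) :
    feexp P G = (((∫⁻ x, erealPos (G x) ∂P).toReal - (∫⁻ x, erealPos (-(G x)) ∂P).toReal : ℝ) : EReal) := by
  rw [feexp, if_neg h, coe_ennreal_eq h', ← EReal.coe_sub]

lemma feexp_const_mul {Ω : Type*} [MeasurableSpace Ω] (P : Measure Ω) {c : ℝ} (hc : 0 < c)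
    (G : Ω → EReal) :
    (c : EReal) * feexp P G = feexp P (fun x => (c : EReal) * G x) := by
  have hTne : ENNReal.ofReal c ≠ 0 := by simp [ENNReal.ofReal_eq_zero, not_le, hc]
  have hTnetop : ENNReal.ofReal c ≠ ⊤ := ENNReal.ofReal_ne_top
  have hpos : ∫⁻ x, erealPos ((c : EReal) * G x) ∂P
      = ENNReal.ofReal c * ∫⁻ x, erealPos (G x) ∂P := by
    simp_rw [erealPos_mul hc]
    exact lintegral_const_mul' _ _ hTnetop
  have hneg : ∫⁻ x, erealPos (-((c : EReal) * G x)) ∂P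
      = ENNReal.ofReal c * ∫⁻ x, erealPos (-(G x)) ∂P := by
    simp_rw [erealPos_neg_mul hc]
    exact lintegral_const_mul' _ _ hTnetop
  by_cases hA : ∫⁻ x, erealPos (G x) ∂P = ⊤
  · rw [feexp_pos_top hA, feexp_pos_top (by rw [hpos, hA, ENNReal.mul_top hTne]),
      EReal.coe_mul_top_of_pos hc]
  · by_cases hB : ∫⁻ x, erealPos (-(G x)) ∂P = ⊤
    · rw [feexp, if_neg hA, hB, feexp, if_neg (by rw [hpos]; exact ENNReal.mul_ne_top hTnetop hA)]
      rw [hneg, hB, ENNReal.mul_top (by exact hTne), EReal.coe_ennreal_top]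
      have h1 : ((((∫⁻ x, erealPos (G x) ∂P).toReal : ℝ)) : EReal) - ⊤ = ⊥ := by
        rw [sub_eq_add_neg, EReal.neg_top, EReal.add_bot]
      have h2 : ((((ENNReal.ofReal c * ∫⁻ x, erealPos (G x) ∂P).toReal : ℝ)) : EReal) - ⊤ = ⊥ := by
        rw [sub_eq_add_neg, EReal.neg_top, EReal.add_bot]
      rw [h1, hpos, h2, EReal.coe_mul_bot_of_pos hc]
    · rw [feexp_eq hA hB, feexp_eq (by rw [hpos]; exact ENNReal.mul_ne_top hTnetop hA)
        (by rw [hneg]; exact ENNReal.mul_ne_top hTnetop hB), hpos, hneg,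
        ENNReal.toReal_mul, ENNReal.toReal_mul, ENNReal.toReal_ofReal hc.le,
        ← EReal.coe_mul]
      ring_nf

lemma ereal_mul_ne_bot {c : ℝ} (hc : 0 < c) {X : EReal} (hX : X ≠ ⊥) : (c : EReal) * X ≠ ⊥ := by
  induction X with
  | bot => exact absurd rfl hX
  | top => rw [EReal.coe_mul_top_of_pos hc]; simp 
  | coe r => rw [← EReal.coe_mul]; exact EReal.coe_ne_bot _

lemma feexp_convex {Ω : Type*} [MeasurableSpace Ω] (P : Measure Ω)
    {t : ℝ} (ht : 0 < t) (ht' : t < 1)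
    {G G₁ G₂ : Ω → EReal}
    (h1m : Measurable fun x => erealPos (G₁ x)) (h1m' : Measurable fun x => erealPos (-(G₁ x)))
    (h2m : Measurable fun x => erealPos (G₂ x)) (h2m' : Measurable fun x => erealPos (-(G₂ x)))
    (h1f : ∫⁻ x, erealPos (-(G₁ x)) ∂P ≠ ⊤)
    (h2f : ∫⁻ x, erealPos (-(G₂ x)) ∂P ≠ ⊤)
    (h0f : ∫⁻ x, erealPos (-(G x)) ∂P ≠ ⊤)
    (hle : ∀ x, G x ≤ (t : EReal) * G₁ x + ((1 - t : ℝ) : EReal) * G₂ x) :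
    feexp P G ≤ (t : EReal) * feexp P G₁ + ((1 - t : ℝ) : EReal) * feexp P G₂ := by
  have ht1 : (0:ℝ) < 1 - t := by linarith
  set T := ENNReal.ofReal t with hT
  set T' := ENNReal.ofReal (1 - t) with hT'
  have hTtop : T ≠ ⊤ := ENNReal.ofReal_ne_top
  have hT'top : T' ≠ ⊤ := ENNReal.ofReal_ne_top
  -- case one of the positive integrals is infinite
  by_cases h1p : ∫⁻ x, erealPos (G₁ x) ∂P = ⊤
  · have : (t : EReal) * feexp P G₁ = ⊤ := by
      rw [feexp_pos_top h1p, EReal.coe_mul_top_of_pos ht]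
    rw [this, EReal.top_add_of_ne_bot (ereal_mul_ne_bot ht1 (feexp_ne_bot h2f))]
    exact le_top
  by_cases h2p : ∫⁻ x, erealPos (G₂ x) ∂P = ⊤
  · have : ((1 - t : ℝ) : EReal) * feexp P G₂ = ⊤ := by
      rw [feexp_pos_top h2p, EReal.coe_mul_top_of_pos ht1]
    rw [this, EReal.add_top_of_ne_bot (ereal_mul_ne_bot ht (feexp_ne_bot h1f))]
    exact le_top
  -- key integrated inequality
  have hptwise : ∀ x, erealPos (G x) + (T * erealPos (-(G₁ x)) + T' * erealPos (-(G₂ x)))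
      ≤ T * erealPos (G₁ x) + T' * erealPos (G₂ x) + erealPos (-(G x)) :=
    fun x => key_pointwise ht ht' (hle x)
  have hmid : Measurable fun x => T * erealPos (G₁ x) + T' * erealPos (G₂ x) :=
    ((h1m.const_mul T).add (h2m.const_mul T'))
  have hRHS : ∫⁻ x, (T * erealPos (G₁ x) + T' * erealPos (G₂ x) + erealPos (-(G x))) ∂P
      = T * (∫⁻ x, erealPos (G₁ x) ∂P) + T' * (∫⁻ x, erealPos (G₂ x) ∂P)
        + ∫⁻ x, erealPos (-(G x)) ∂P := by
    rw [lintegral_add_left hmid, lintegral_add_left (h1m.const_mul T),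
      lintegral_const_mul' _ _ hTtop, lintegral_const_mul' _ _ hT'top]
  have hLHS : ∫⁻ x, (erealPos (G x) + (T * erealPos (-(G₁ x)) + T' * erealPos (-(G₂ x)))) ∂P
      = (∫⁻ x, erealPos (G x) ∂P) + (T * (∫⁻ x, erealPos (-(G₁ x)) ∂P)
        + T' * (∫⁻ x, erealPos (-(G₂ x)) ∂P)) := by
    rw [lintegral_add_right (g := fun x => T * erealPos (-(G₁ x)) + T' * erealPos (-(G₂ x))) _ ((h1m'.const_mul T).add (h2m'.const_mul T')),
      lintegral_add_left (h1m'.const_mul T),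
      lintegral_const_mul' _ _ hTtop, lintegral_const_mul' _ _ hT'top]
  have hstar : (∫⁻ x, erealPos (G x) ∂P) + (T * (∫⁻ x, erealPos (-(G₁ x)) ∂P)
        + T' * (∫⁻ x, erealPos (-(G₂ x)) ∂P))
      ≤ T * (∫⁻ x, erealPos (G₁ x) ∂P) + T' * (∫⁻ x, erealPos (G₂ x) ∂P)
        + ∫⁻ x, erealPos (-(G x)) ∂P := by
    rw [← hLHS, ← hRHS]
    exact lintegral_mono hptwise
  have hRHSfin : T * (∫⁻ x, erealPos (G₁ x) ∂P) + T' * (∫⁻ x, erealPos (G₂ x) ∂P)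
        + (∫⁻ x, erealPos (-(G x)) ∂P) ≠ ⊤ :=
    ENNReal.add_ne_top.2 ⟨ENNReal.add_ne_top.2 ⟨ENNReal.mul_ne_top hTtop h1p,
      ENNReal.mul_ne_top hT'top h2p⟩, h0f⟩
  have h0p : ∫⁻ x, erealPos (G x) ∂P ≠ ⊤ := by
    intro hcon
    apply hRHSfin
    rw [← top_le_iff]
    calc (⊤:ℝ≥0∞) = ∫⁻ x, erealPos (G x) ∂P := hcon.symm
      _ ≤ _ := le_self_add.trans hstar
  -- convert to reals
  rw [feexp_eq h0p h0f, feexp_eq h1p h1f, feexp_eq h2p h2f, ← EReal.coe_mul, ← EReal.coe_mul,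
    ← EReal.coe_add, EReal.coe_le_coe_iff]
  have := (ENNReal.toReal_le_toReal (by
      exact ENNReal.add_ne_top.2 ⟨h0p, ENNReal.add_ne_top.2 ⟨ENNReal.mul_ne_top hTtop h1f,
        ENNReal.mul_ne_top hT'top h2f⟩⟩) hRHSfin).2 hstar
  rw [ENNReal.toReal_add h0p (ENNReal.add_ne_top.2 ⟨ENNReal.mul_ne_top hTtop h1f,
      ENNReal.mul_ne_top hT'top h2f⟩),
    ENNReal.toReal_add (ENNReal.mul_ne_top hTtop h1f) (ENNReal.mul_ne_top hT'top h2f),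
    ENNReal.toReal_add (ENNReal.add_ne_top.2 ⟨ENNReal.mul_ne_top hTtop h1p,
      ENNReal.mul_ne_top hT'top h2p⟩) h0f,
    ENNReal.toReal_add (ENNReal.mul_ne_top hTtop h1p) (ENNReal.mul_ne_top hT'top h2p),
    ENNReal.toReal_mul, ENNReal.toReal_mul, ENNReal.toReal_mul, ENNReal.toReal_mul,
    hT, hT', ENNReal.toReal_ofReal ht.le, ENNReal.toReal_ofReal ht1.le] at this
  linarith


lemma one_mem' {a b : EReal} (ha1 : a < 1) (hb1 : (1 : EReal) < b) :
    a < ((1:ℝ) : EReal) ∧ ((1:ℝ) : EReal) < b := by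
  rw [EReal.coe_one]; exact ⟨ha1, hb1⟩

lemma legT_ge {a b : EReal} (ha1 : a < 1) (hb1 : (1 : EReal) < b) {f : ℝ → ℝ}
    (hf1 : f 1 = 0) (y : ℝ) : (y : EReal) ≤ legT a b f y := by
  have h := le_iSup (fun x : {t : ℝ // a < (t : EReal) ∧ (t : EReal) < b} =>
    ((x.1 * y - f x.1 : ℝ) : EReal)) ⟨1, one_mem' ha1 hb1⟩
  exact le_trans (by simp [hf1]) h

lemma legT_mono {a b : EReal} (ha : 0 ≤ a) {f : ℝ → ℝ} : Monotone (legT a b f) := by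
  intro y y' hyy'
  refine iSup_mono fun x => ?_
  have hx0 : (0:ℝ) ≤ x.1 := by
    have : ((0:ℝ) : EReal) < (x.1 : EReal) := lt_of_le_of_lt (by exact_mod_cast ha) x.2.1
    exact (EReal.coe_lt_coe_iff.1 this).le
  exact EReal.coe_le_coe_iff.2 (by nlinarith [mul_le_mul_of_nonneg_left hyy' hx0])

lemma const_mul_iSup {ι : Sort*} [Nonempty ι] {c : ℝ} (hc : 0 < c) (h : ι → ℝ) :
    (c : EReal) * ⨆ i, ((h i : ℝ) : EReal) = ⨆ i, ((c * h i : ℝ) : EReal) := by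
  refine le_antisymm ?_ (iSup_le fun i => ?_)
  · set S := ⨆ i, ((c * h i : ℝ) : EReal) with hS
    rcases eq_or_ne S ⊤ with hStop | hStop
    · rw [hStop]; exact le_top
    · have hSbot : S ≠ ⊥ := by
        refine ne_bot_of_le_ne_bot (EReal.coe_ne_bot (c * h (Classical.arbitrary ι))) ?_
        exact le_iSup (fun i => ((c * h i : ℝ) : EReal)) _
      lift S to ℝ using ⟨hStop, hSbot⟩ with s
      have hub : ∀ i, h i ≤ s / c := fun i => by
        have : ((c * h i : ℝ) : EReal) ≤ (s : EReal) :=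
          hS ▸ le_iSup (fun i => ((c * h i : ℝ) : EReal)) i
        rw [EReal.coe_le_coe_iff] at this
        rw [le_div_iff₀ hc, mul_comm]; exact this
      have : (⨆ i, ((h i : ℝ) : EReal)) ≤ ((s / c : ℝ) : EReal) :=
        iSup_le fun i => EReal.coe_le_coe_iff.2 (hub i)
      calc (c : EReal) * ⨆ i, ((h i : ℝ) : EReal) ≤ (c : EReal) * ((s / c : ℝ) : EReal) :=
            mul_le_mul_of_nonneg_left this (by exact_mod_cast hc.le)
        _ = (s : EReal) := by rw [← EReal.coe_mul]; norm_cast; field_simp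
  · rw [EReal.coe_mul]
    exact mul_le_mul_of_nonneg_left (le_iSup (fun i => ((h i : ℝ) : EReal)) i)
      (by exact_mod_cast hc.le)


lemma ereal_distrib {c : ℝ} (hc : 0 < c) (r : ℝ) {X : EReal} (hX : X ≠ ⊥) :
    (c : EReal) * ((r : EReal) + X) = ((c * r : ℝ) : EReal) + (c : EReal) * X := by
  induction X with
  | bot => exact absurd rfl hX
  | top =>
    rw [EReal.add_top_of_ne_bot (EReal.coe_ne_bot r), EReal.coe_mul_top_of_pos hc,
      EReal.add_top_of_ne_bot (EReal.coe_ne_bot _)]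
  | coe x =>
    rw [← EReal.coe_add, ← EReal.coe_mul, ← EReal.coe_mul, ← EReal.coe_add, mul_add]

/-- The objective function `(λ, β, ν) ↦ g*(ν) + β + ηλ + λ E_P[f*((ψ - ν·φ - β)/λ)]`
of the general DRO dual problem is convex on `(0,∞) × ℝ × ℝᵏ`. -/
theorem gen_DRO_objective_convex {Ω : Type*} [MeasurableSpace Ω]
    {a b : EReal} (ha : 0 ≤ a) (ha1 : a < 1) (hb1 : (1 : EReal) < b)
    {f : ℝ → ℝ} (hf : ConvexOn ℝ {t : ℝ | a < (t : EReal) ∧ (t : EReal) < b} f)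
    (hf1 : f 1 = 0)
    (P : Measure Ω) [IsProbabilityMeasure P]
    {k : ℕ} {φ : Fin k → Ω → ℝ}
    (hφm : ∀ i, Measurable (φ i)) (hφ1 : ∀ i, Integrable (φ i) P)
    {ψ : Ω → ℝ} (hψm : Measurable ψ) (hψ1 : ∫⁻ x, ENNReal.ofReal (-(ψ x)) ∂P < ⊤)
    {g : (Fin k → ℝ) → ℝ} (hg : ConvexOn ℝ univ g)
    (gs : (Fin k → ℝ) → ℝ)
    (hgs : ∀ ν : Fin k → ℝ,
      IsLUB (range fun z : Fin k → ℝ => (∑ i, ν i * z i) - g z) (gs ν))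
    {η : ℝ} (hη : 0 < η)
    (F : ℝ × ℝ × (Fin k → ℝ) → EReal)
    (hF : ∀ p : ℝ × ℝ × (Fin k → ℝ),
      F p = ((gs p.2.2 + p.2.1 + η * p.1 : ℝ) : EReal)
        + (p.1 : EReal)
          * feexp P (fun x => legT a b f ((ψ x - ∑ i, p.2.2 i * φ i x - p.2.1) / p.1))) :
    ∀ p q : ℝ × ℝ × (Fin k → ℝ), 0 < p.1 → 0 < q.1 → ∀ t : ℝ, 0 ≤ t → t ≤ 1 →
      F (t • p + (1 - t) • q) ≤ (t : EReal) * F p + ((1 - t : ℝ) : EReal) * F q := by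
  intro p q hp hq t ht0 ht1
  rcases eq_or_lt_of_le ht0 with rfl | ht
  · have h1 : (0:ℝ) • p + (1-(0:ℝ)) • q = q := by simp
    rw [h1]
    norm_num
  rcases eq_or_lt_of_le ht1 with rfl | ht'
  · have h1 : (1:ℝ) • p + (1-(1:ℝ)) • q = p := by simp
    rw [h1]
    norm_num
  -- main case 0 < t < 1
  have hNE : Nonempty {s : ℝ // a < (s:EReal) ∧ (s:EReal) < b} := ⟨⟨1, one_mem' ha1 hb1⟩⟩
  have ht1' : (0:ℝ) < 1 - t := by linarith
  obtain ⟨lp, βp, νp⟩ := p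
  obtain ⟨lq, βq, νq⟩ := q
  simp only at hp hq
  have hm : t • ((lp, βp, νp) : ℝ × ℝ × (Fin k → ℝ)) + (1-t) • ((lq, βq, νq) : ℝ × ℝ × (Fin k → ℝ))
      = (t * lp + (1-t) * lq, t * βp + (1-t) * βq, t • νp + (1-t) • νq) := by
    simp [Prod.ext_iff, smul_eq_mul]
  rw [hm]
  set lm := t * lp + (1-t) * lq with hlmdef
  have hlm : 0 < lm := by positivity
  -- rewrite F using feexp_const_mul
  have hFr : ∀ (l β : ℝ) (ν : Fin k → ℝ), 0 < l → F (l, β, ν)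
      = ((gs ν + β + η * l : ℝ) : EReal)
        + feexp P (fun x => (l : EReal) * legT a b f ((ψ x - ∑ i, ν i * φ i x - β) / l)) := by
    intro l β ν hl
    rw [hF (l, β, ν)]
    simp only
    rw [feexp_const_mul P hl]
  rw [hFr _ _ _ hlm, hFr _ _ _ hp, hFr _ _ _ hq]
  -- perspective representation
  have hpersp : ∀ (l : ℝ), 0 < l → ∀ y : ℝ, (l : EReal) * legT a b f (y / l)
      = ⨆ s : {s : ℝ // a < (s:EReal) ∧ (s:EReal) < b}, ((s.1 * y - l * f s.1 : ℝ) : EReal) := by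
    intro l hl y
    rw [legT, const_mul_iSup hl]
    congr 1
    funext s
    congr 1
    field_simp
  -- measurability
  have hwm : ∀ (β : ℝ) (ν : Fin k → ℝ), Measurable (fun x => ψ x - ∑ i, ν i * φ i x - β) :=
    fun β ν => ((hψm.sub (Finset.measurable_sum _ fun i _ => (hφm i).const_mul (ν i))).sub
      measurable_const)
  have hΦmono : ∀ (l : ℝ), 0 < l → Monotone (fun y : ℝ => (l:EReal) * legT a b f (y / l)) := by
    intro l hl y y' hyy'
    exact mul_le_mul_of_nonneg_left (legT_mono ha ((div_le_div_iff_of_pos_right hl).2 hyy'))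
      (by exact_mod_cast hl.le)
  have hmeas : ∀ (l β : ℝ) (ν : Fin k → ℝ), 0 < l →
      Measurable (fun x => erealPos ((l:EReal) * legT a b f ((ψ x - ∑ i, ν i * φ i x - β)/l)))
      ∧ Measurable
        (fun x => erealPos (-((l:EReal) * legT a b f ((ψ x - ∑ i, ν i * φ i x - β)/l)))) := by
    intro l β ν hl
    constructor
    · exact ((erealPos_mono.comp (hΦmono l hl)).measurable).comp (hwm β ν)
    · have hA : Antitone (fun y : ℝ => erealPos (-((l:EReal) * legT a b f (y / l)))) :=
        fun y y' hyy' => erealPos_mono (EReal.neg_le_neg_iff.2 (hΦmono l hl hyy'))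
      exact hA.measurable.comp (hwm β ν)
  -- finiteness of negative parts
  have hfin : ∀ (l β : ℝ) (ν : Fin k → ℝ), 0 < l →
      ∫⁻ x, erealPos (-((l:EReal) * legT a b f ((ψ x - ∑ i, ν i * φ i x - β)/l))) ∂P ≠ ⊤ := by
    intro l β ν hl
    have hb : ∀ x, erealPos (-((l:EReal) * legT a b f ((ψ x - ∑ i, ν i * φ i x - β)/l)))
        ≤ ENNReal.ofReal (-(ψ x))
          + ((∑ i, ENNReal.ofReal (|ν i| * |φ i x|)) + ENNReal.ofReal |β|) := by
      intro x
      set w := ψ x - ∑ i, ν i * φ i x - β with hwdef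
      have h1 : ((w : ℝ) : EReal) ≤ (l:EReal) * legT a b f (w / l) := by
        have h2 := legT_ge ha1 hb1 hf1 (w / l)
        calc ((w : ℝ) : EReal) = (l : EReal) * ((w / l : ℝ) : EReal) := by
              rw [← EReal.coe_mul]
              norm_cast
              field_simp
          _ ≤ (l:EReal) * legT a b f (w / l) :=
              mul_le_mul_of_nonneg_left h2 (by exact_mod_cast hl.le)
      have h2 : erealPos (-((l:EReal) * legT a b f (w / l))) ≤ erealPos (-((w:ℝ) : EReal)) :=
        erealPos_mono (EReal.neg_le_neg_iff.2 h1)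
      rw [← EReal.coe_neg, erealPos_coe] at h2
      refine h2.trans ?_
      have h3 : -w ≤ -ψ x + ((∑ i, |ν i| * |φ i x|) + |β|) := by
        have h4 : ∑ i, ν i * φ i x ≤ ∑ i, |ν i| * |φ i x| :=
          Finset.sum_le_sum fun i _ => (le_abs_self _).trans (le_of_eq (abs_mul _ _))
        have h5 := le_abs_self β
        rw [hwdef]
        ring_nf
        linarith
      refine (ENNReal.ofReal_le_ofReal h3).trans ?_
      refine (ENNReal.ofReal_add_le).trans (add_le_add_right ?_ _)
      refine (ENNReal.ofReal_add_le).trans (add_le_add_left ?_ _)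
      rw [ENNReal.ofReal_sum_of_nonneg fun i _ => by positivity]
    refine ne_top_of_le_ne_top ?_ (lintegral_mono hb)
    have hmA : Measurable fun x => ENNReal.ofReal (-(ψ x)) :=
      (hψm.neg).ennreal_ofReal
    have hmB : Measurable fun x => ∑ i, ENNReal.ofReal (|ν i| * |φ i x|) :=
      Finset.measurable_sum _ fun i _ => (((hφm i).abs.const_mul |ν i|).ennreal_ofReal)
    rw [lintegral_add_left hmA, lintegral_add_left hmB, lintegral_const,
      lintegral_finset_sum _ fun i _ => (((hφm i).abs.const_mul |ν i|).ennreal_ofReal)]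
    refine ENNReal.add_ne_top.2 ⟨hψ1.ne, ENNReal.add_ne_top.2 ⟨?_, ENNReal.mul_ne_top
      ENNReal.ofReal_ne_top (measure_ne_top P _)⟩⟩
    refine ne_of_lt (ENNReal.sum_lt_top.2 fun i _ => ?_)
    have hx : ∀ x, ENNReal.ofReal (|ν i| * |φ i x|) = ENNReal.ofReal |ν i| * ‖φ i x‖₊ := by
      intro x
      rw [ENNReal.ofReal_mul (abs_nonneg _)]
      congr 1
      rw [← Real.norm_eq_abs]; exact ofReal_norm (φ i x)
    simp_rw [hx]
    rw [lintegral_const_mul' _ _ ENNReal.ofReal_ne_top]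
    exact ENNReal.mul_lt_top ENNReal.ofReal_lt_top (hφ1 i).2
  -- decomposition of the argument
  have hwsum : ∀ x, ψ x - ∑ i, (t • νp + (1-t) • νq) i * φ i x - (t * βp + (1-t) * βq)
      = t * (ψ x - ∑ i, νp i * φ i x - βp) + (1-t) * (ψ x - ∑ i, νq i * φ i x - βq) := by
    intro x
    have h4 : ∑ i, (t • νp + (1-t) • νq) i * φ i x
        = t * ∑ i, νp i * φ i x + (1-t) * ∑ i, νq i * φ i x := by
      rw [Finset.mul_sum, Finset.mul_sum, ← Finset.sum_add_distrib]
      refine Finset.sum_congr rfl fun i _ => ?_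
      simp only [Pi.add_apply, Pi.smul_apply, smul_eq_mul]
      ring
    rw [h4]
    ring
  -- convexity of the feexp part
  have hcvx : feexp P (fun x => (lm : EReal)
        * legT a b f ((ψ x - ∑ i, (t • νp + (1-t) • νq) i * φ i x - (t * βp + (1-t) * βq)) / lm))
      ≤ (t : EReal) * feexp P (fun x => (lp : EReal)
          * legT a b f ((ψ x - ∑ i, νp i * φ i x - βp) / lp))
        + ((1 - t : ℝ) : EReal) * feexp P (fun x => (lq : EReal)
          * legT a b f ((ψ x - ∑ i, νq i * φ i x - βq) / lq)) := by
    refine feexp_convex P ht ht' (hmeas lp βp νp hp).1 (hmeas lp βp νp hp).2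
      (hmeas lq βq νq hq).1 (hmeas lq βq νq hq).2 (hfin lp βp νp hp) (hfin lq βq νq hq)
      (hfin lm _ _ hlm) ?_
    intro x
    rw [hpersp lm hlm, hpersp lp hp, hpersp lq hq, hwsum x]
    refine iSup_le fun s => ?_
    calc ((s.1 * (t * (ψ x - ∑ i, νp i * φ i x - βp)
            + (1-t) * (ψ x - ∑ i, νq i * φ i x - βq)) - lm * f s.1 : ℝ) : EReal)
        = (t : EReal) * ((s.1 * (ψ x - ∑ i, νp i * φ i x - βp) - lp * f s.1 : ℝ) : EReal)
          + ((1 - t : ℝ) : EReal)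
            * ((s.1 * (ψ x - ∑ i, νq i * φ i x - βq) - lq * f s.1 : ℝ) : EReal) := by
          rw [← EReal.coe_mul, ← EReal.coe_mul, ← EReal.coe_add]
          norm_cast
          rw [hlmdef]
          ring
      _ ≤ _ := add_le_add
          (mul_le_mul_of_nonneg_left (le_iSup (fun s' : {s : ℝ // a < (s:EReal) ∧ (s:EReal) < b}
              => ((s'.1 * (ψ x - ∑ i, νp i * φ i x - βp) - lp * f s'.1 : ℝ) : EReal)) s)
            (by exact_mod_cast ht.le))
          (mul_le_mul_of_nonneg_left (le_iSup (fun s' : {s : ℝ // a < (s:EReal) ∧ (s:EReal) < b}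
              => ((s'.1 * (ψ x - ∑ i, νq i * φ i x - βq) - lq * f s'.1 : ℝ) : EReal)) s)
            (by exact_mod_cast ht1'.le))
  -- convexity of the affine part
  have hgs_cvx : gs (t • νp + (1-t) • νq) + (t * βp + (1-t) * βq) + η * lm
      ≤ t * (gs νp + βp + η * lp) + (1-t) * (gs νq + βq + η * lq) := by
    have h1 : gs (t • νp + (1-t) • νq) ≤ t * gs νp + (1-t) * gs νq := by
      refine (hgs _).2 ?_
      rintro y ⟨z, rfl⟩
      simp only
      have h2 : (∑ i, νp i * z i) - g z ≤ gs νp := (hgs νp).1 ⟨z, rfl⟩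
      have h3 : (∑ i, νq i * z i) - g z ≤ gs νq := (hgs νq).1 ⟨z, rfl⟩
      have h4 : ∑ i, (t • νp + (1-t) • νq) i * z i
          = t * ∑ i, νp i * z i + (1-t) * ∑ i, νq i * z i := by
        rw [Finset.mul_sum, Finset.mul_sum, ← Finset.sum_add_distrib]
        refine Finset.sum_congr rfl fun i _ => ?_
        simp only [Pi.add_apply, Pi.smul_apply, smul_eq_mul]
        ring
      rw [h4]
      nlinarith [mul_le_mul_of_nonneg_left h2 ht.le, mul_le_mul_of_nonneg_left h3 ht1'.le]
    have expand : t * (gs νp + βp + η * lp) + (1-t) * (gs νq + βq + η * lq)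
        = (t * gs νp + (1-t) * gs νq) + (t * βp + (1-t) * βq) + η * lm := by
      rw [hlmdef]; ring
    rw [expand]
    linarith [h1]
  -- assembly
  have hnbp : feexp P (fun x => (lp : EReal)
      * legT a b f ((ψ x - ∑ i, νp i * φ i x - βp) / lp)) ≠ ⊥ := feexp_ne_bot (hfin lp βp νp hp)
  have hnbq : feexp P (fun x => (lq : EReal)
      * legT a b f ((ψ x - ∑ i, νq i * φ i x - βq) / lq)) ≠ ⊥ := feexp_ne_bot (hfin lq βq νq hq)
  rw [ereal_distrib ht _ hnbp, ereal_distrib ht1' _ hnbq, add_add_add_comm, ← EReal.coe_add]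
  exact add_le_add (EReal.coe_le_coe_iff.2 hgs_cvx) hcvx
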